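/- (The exponential map gives a path starting at X with prescribed initial velocity.) Let X be a real N×q matrix with orthonormal columns, U a real N×q matrix with UᵀU = I_q and XᵀU = 0, V a q×q orthogonal matrix, and Σ a q×q diagonal matrix. Define γ(t) = X V cos(tΣ) Vᵀ + U sin(tΣ) Vᵀ for t ∈ ℝ. Then γ(0) = X, γ(t)ᵀγ(t) = I_q for all t, and γ is differentiable at t = 0 (entrywise) with derivative γ′(0) = U Σ Vᵀ. -/

import Mathlib

open Matrix

/-- The geodesic path γ(t) = X V cos(tΣ) Vᵀ + U sin(tΣ) Vᵀ. -/
noncomputable def geodesicPath {N q : ℕ} (X U : Matrix (Fin N) (Fin q) ℝ)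
    (V : Matrix (Fin q) (Fin q) ℝ) (σ : Fin q → ℝ) (t : ℝ) :
    Matrix (Fin N) (Fin q) ℝ :=
  X * V * Matrix.diagonal (fun i => Real.cos (t * σ i)) * Vᵀ
    + U * Matrix.diagonal (fun i => Real.sin (t * σ i)) * Vᵀ

/-- γ(0) = X, γ(t) has orthonormal columns for all t, and γ is differentiable
at t = 0 entrywise with derivative γ′(0) = U Σ Vᵀ. -/
theorem geodesic_path_properties
    (N q : ℕ) (X U : Matrix (Fin N) (Fin q) ℝ)
    (V : Matrix (Fin q) (Fin q) ℝ) (σ : Fin q → ℝ)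
    (hX : Xᵀ * X = 1) (hU : Uᵀ * U = 1) (hXU : Xᵀ * U = 0)
    (hV : Vᵀ * V = 1) :
    geodesicPath X U V σ 0 = X ∧
    (∀ t : ℝ, (geodesicPath X U V σ t)ᵀ * geodesicPath X U V σ t = 1) ∧
    (∀ (i : Fin N) (j : Fin q),
      HasDerivAt (fun t : ℝ => geodesicPath X U V σ t i j)
        ((U * Matrix.diagonal σ * Vᵀ) i j) 0) := by
  have hVVt : V * Vᵀ = 1 := mul_eq_one_comm.mp hV
  have hUX : Uᵀ * X = 0 := by
    have := congrArg Matrix.transpose hXU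
    simpa using this
  refine ⟨?_, ?_, ?_⟩
  · simp [geodesicPath, Matrix.mul_assoc, hVVt]
  · intro t
    set c : Matrix (Fin q) (Fin q) ℝ := Matrix.diagonal (fun i => Real.cos (t * σ i)) with hc
    set s : Matrix (Fin q) (Fin q) ℝ := Matrix.diagonal (fun i => Real.sin (t * σ i)) with hs
    have h1 : ∀ M : Matrix (Fin q) (Fin q) ℝ, Xᵀ * (X * M) = M := fun M => by
      rw [← Matrix.mul_assoc, hX, Matrix.one_mul]
    have h2 : ∀ M : Matrix (Fin q) (Fin q) ℝ, Vᵀ * (V * M) = M := fun M => by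
      rw [← Matrix.mul_assoc, hV, Matrix.one_mul]
    have h3 : ∀ M : Matrix (Fin q) (Fin q) ℝ, Uᵀ * (U * M) = M := fun M => by
      rw [← Matrix.mul_assoc, hU, Matrix.one_mul]
    have h4 : ∀ M : Matrix (Fin q) (Fin q) ℝ, Xᵀ * (U * M) = 0 := fun M => by
      rw [← Matrix.mul_assoc, hXU, Matrix.zero_mul]
    have h5 : ∀ M : Matrix (Fin q) (Fin q) ℝ, Uᵀ * (X * M) = 0 := fun M => by
      rw [← Matrix.mul_assoc, hUX, Matrix.zero_mul]
    have hfun : ∀ k, Real.cos (t * σ k) * Real.cos (t * σ k)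
        + Real.sin (t * σ k) * Real.sin (t * σ k) = 1 := fun k => by
      have := Real.cos_sq_add_sin_sq (t * σ k); nlinarith [this]
    have hcs : c * c + s * s = (1 : Matrix (Fin q) (Fin q) ℝ) := by
      rw [hc, hs, Matrix.diagonal_mul_diagonal, Matrix.diagonal_mul_diagonal]
      ext k l
      rcases eq_or_ne k l with h | h
      · subst h
        simp [Matrix.diagonal_apply_eq, hfun k, Matrix.one_apply_eq]
      · simp [Matrix.add_apply, Matrix.diagonal_apply_ne _ h, Matrix.one_apply_ne h]
    have hct : cᵀ = c := Matrix.diagonal_transpose _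
    have hst : sᵀ = s := Matrix.diagonal_transpose _
    show (X * V * c * Vᵀ + U * s * Vᵀ)ᵀ * (X * V * c * Vᵀ + U * s * Vᵀ) = 1
    simp only [Matrix.transpose_add, Matrix.transpose_mul, Matrix.transpose_transpose,
      hct, hst, Matrix.add_mul, Matrix.mul_add, Matrix.mul_assoc, h1, h2, h3, h4, h5,
      Matrix.mul_zero, Matrix.zero_mul, add_zero, zero_add]
    simp only [← Matrix.mul_assoc]
    rw [← add_mul, Matrix.mul_assoc V c c, Matrix.mul_assoc V s s, ← mul_add, hcs,
      mul_one, hVVt]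
  · intro i j
    have key : ∀ t : ℝ, geodesicPath X U V σ t i j =
        ∑ k, ((X * V) i k * Real.cos (t * σ k) + U i k * Real.sin (t * σ k)) * Vᵀ k j := by
      intro t
      simp [geodesicPath, Matrix.add_apply, Matrix.mul_apply, Matrix.diagonal_apply,
        Finset.sum_add_distrib, add_mul, mul_ite, ite_mul, mul_zero, zero_mul]
    have hterm : ∀ k : Fin q, HasDerivAt
        (fun t : ℝ => ((X * V) i k * Real.cos (t * σ k) + U i k * Real.sin (t * σ k)) * Vᵀ k j)
        ((U i k * σ k) * Vᵀ k j) 0 := by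
      intro k
      have ht : HasDerivAt (fun t : ℝ => t * σ k) (σ k) 0 := hasDerivAt_mul_const (σ k)
      have hcos : HasDerivAt (fun t : ℝ => Real.cos (t * σ k)) 0 0 := by
        simpa using ht.cos
      have hsin : HasDerivAt (fun t : ℝ => Real.sin (t * σ k)) (σ k) 0 := by
        simpa using ht.sin
      have := ((hcos.const_mul ((X * V) i k)).add (hsin.const_mul (U i k))).mul_const (Vᵀ k j)
      simpa using this
    have hsum := HasDerivAt.fun_sum (fun k (_ : k ∈ Finset.univ) => hterm k)
    have hval : (U * Matrix.diagonal σ * Vᵀ) i j = ∑ k, (U i k * σ k) * Vᵀ k j := by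
      simp [Matrix.mul_apply, Matrix.diagonal_apply, mul_ite, ite_mul, mul_zero, zero_mul]
    rw [hval]
    exact hsum.congr_of_eventuallyEq (Filter.Eventually.of_forall fun t => key t)
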